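/- Suppose a sequence (x^p) of vectors in T = {x : ‖y − Ax‖₂ ≤ ε, Bx ≤ b}, each with ‖x^p‖₀ = k, satisfies: there is a fixed nonempty index set S₁ such that |x^p_i| → ∞ for all i ∈ S₁, and the components x^p_i for i ∈ S₂ = supp(x^p) \ S₁ (with S₂ fixed) remain bounded. Then there exists a nonzero unit vector η̄ ∈ ℝ^{S₁} with A_{S₁} η̄ = 0 and B_{S₁} η̄ ≤ 0 (componentwise). -/

import Mathlib

open Matrix Finset

/-- The ℓ₂ norm of a finite real vector. -/
noncomputable def l2 {ι : Type*} [Fintype ι] (v : ι → ℝ) : ℝ := Real.sqrt (∑ i, v i ^ 2)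

/-- The ℓ₀ "norm": number of nonzero components. -/
noncomputable def l0 {n : ℕ} (x : Fin n → ℝ) : ℕ :=
  (Finset.univ.filter fun i => x i ≠ 0).card

/-- The support of a vector as a finset. -/
noncomputable def spt {n : ℕ} (x : Fin n → ℝ) : Finset (Fin n) :=
  Finset.univ.filter fun i => x i ≠ 0

/-- Membership in the feasible set T = {x : ‖y - Ax‖₂ ≤ ε, Bx ≤ b}. -/
def feasible {m l n : ℕ} (A : Matrix (Fin m) (Fin n) ℝ) (B : Matrix (Fin l) (Fin n) ℝ)
    (y : Fin m → ℝ) (b : Fin l → ℝ) (ε : ℝ) (x : Fin n → ℝ) : Prop :=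
  l2 (y - A.mulVec x) ≤ ε ∧ ∀ i, B.mulVec x i ≤ b i

/-- x is a sparsest solution: feasible and minimizing ‖·‖₀ over T. -/
noncomputable def sparsest {m l n : ℕ} (A : Matrix (Fin m) (Fin n) ℝ)
    (B : Matrix (Fin l) (Fin n) ℝ) (y : Fin m → ℝ) (b : Fin l → ℝ) (ε : ℝ)
    (x : Fin n → ℝ) : Prop :=
  feasible A B y b ε x ∧ ∀ z, feasible A B y b ε z → l0 x ≤ l0 z

/-- Column submatrix indexed by S. -/
def colSub {m n : ℕ} (A : Matrix (Fin m) (Fin n) ℝ) (S : Finset (Fin n)) :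
    Matrix (Fin m) {j // j ∈ S} ℝ :=
  A.submatrix id Subtype.val

/-- Row-and-column submatrix with rows in I and columns in S. -/
def rcSub {l n : ℕ} (B : Matrix (Fin l) (Fin n) ℝ) (I : Finset (Fin l))
    (S : Finset (Fin n)) : Matrix {i // i ∈ I} {j // j ∈ S} ℝ :=
  B.submatrix Subtype.val Subtype.val

/-- Active index set of the constraints Bx ≤ b at x. -/
noncomputable def activeSet {l n : ℕ} (B : Matrix (Fin l) (Fin n) ℝ) (b : Fin l → ℝ)
    (x : Fin n → ℝ) : Finset (Fin l) :=
  Finset.univ.filter fun i => B.mulVec x i = b i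

lemma abs_le_l2 {ι : Type*} [Fintype ι] (v : ι → ℝ) (i : ι) : |v i| ≤ l2 v := by
  rw [l2, ← Real.sqrt_sq_eq_abs]
  exact Real.sqrt_le_sqrt
    (Finset.single_le_sum (f := fun j => v j ^ 2) (fun j _ => sq_nonneg _) (mem_univ i))

lemma l2_smul' {ι : Type*} [Fintype ι] (c : ℝ) (v : ι → ℝ) : l2 (c • v) = |c| * l2 v := by
  simp only [l2, Pi.smul_apply, smul_eq_mul, mul_pow, ← Finset.mul_sum]
  rw [Real.sqrt_mul (sq_nonneg c), Real.sqrt_sq_eq_abs]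

lemma continuous_l2 {ι : Type*} [Fintype ι] : Continuous (l2 (ι := ι)) := by
  unfold l2
  exact Real.continuous_sqrt.comp (by continuity)

/-- an unbounded sequence of k-sparse feasible points with blow-up on a
fixed index set S₁ and boundedness on the remaining support produces a unit vector in
Null(A_{S₁}) with B_{S₁} η̄ ≤ 0. -/
theorem stmt16 {m l n : ℕ} (A : Matrix (Fin m) (Fin n) ℝ) (B : Matrix (Fin l) (Fin n) ℝ)
    (y : Fin m → ℝ) (b : Fin l → ℝ) (ε : ℝ) (hε : 0 ≤ ε) (k : ℕ)
    (x : ℕ → Fin n → ℝ)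
    (hfeas : ∀ p, feasible A B y b ε (x p)) (hk : ∀ p, l0 (x p) = k)
    (S₁ S₂ : Finset (Fin n)) (hS₁ : S₁.Nonempty)
    (hblow : ∀ i ∈ S₁, Filter.Tendsto (fun p => |x p i|) Filter.atTop Filter.atTop)
    (hS₂ : ∀ p, spt (x p) \ S₁ = S₂)
    (hbdd : ∃ C : ℝ, ∀ p, ∀ i ∈ S₂, |x p i| ≤ C) :
    ∃ η : {j // j ∈ S₁} → ℝ, η ≠ 0 ∧ l2 η = 1 ∧
      (colSub A S₁).mulVec η = 0 ∧ ∀ i, (colSub B S₁).mulVec η i ≤ 0 := by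
  classical
  obtain ⟨C₀, hC₀⟩ := hbdd
  set C : ℝ := max C₀ 0 with hCdef
  have hCle : ∀ p, ∀ i ∈ S₂, |x p i| ≤ C := fun p i hi =>
    (hC₀ p i hi).trans (le_max_left _ _)
  obtain ⟨i₀, hi₀⟩ := hS₁
  -- disjointness and support
  have hdisj : Disjoint S₁ S₂ := by
    rw [← hS₂ 0]; exact Finset.disjoint_sdiff
  have hsupp : ∀ p j, j ∉ S₁ → j ∉ S₂ → x p j = 0 := by
    intro p j h1 h2
    by_contra h
    exact h2 ((hS₂ p) ▸ Finset.mem_sdiff.mpr ⟨by simp [spt, h], h1⟩)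
  -- decomposition of any linear functional
  have hsum : ∀ p (c : Fin n → ℝ),
      ∑ j, c j * x p j = (∑ j ∈ S₁, c j * x p j) + ∑ j ∈ S₂, c j * x p j := by
    intro p c
    rw [← Finset.sum_union hdisj]
    refine (Finset.sum_subset (Finset.subset_univ _) ?_).symm
    intro j _ hj
    rw [Finset.mem_union] at hj
    push_neg at hj
    rw [hsupp p j hj.1 hj.2, mul_zero]
  -- shift so the S₁-norm is ≥ 1
  obtain ⟨P, hP⟩ := Filter.eventually_atTop.mp ((hblow i₀ hi₀).eventually_ge_atTop 1)
  set v : ℕ → {j // j ∈ S₁} → ℝ := fun p j => x (p + P) j.val with hvdef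
  set N : ℕ → ℝ := fun p => l2 (v p) with hNdef
  have hN1 : ∀ p, 1 ≤ N p := fun p =>
    le_trans (hP (p + P) (Nat.le_add_left P p)) (abs_le_l2 (v p) ⟨i₀, hi₀⟩)
  have hNpos : ∀ p, 0 < N p := fun p => lt_of_lt_of_le one_pos (hN1 p)
  have hNtop : Filter.Tendsto N Filter.atTop Filter.atTop := by
    apply Filter.tendsto_atTop_mono (fun p => abs_le_l2 (v p) ⟨i₀, hi₀⟩)
    exact (hblow i₀ hi₀).comp (Filter.tendsto_add_atTop_nat P)
  set u : ℕ → {j // j ∈ S₁} → ℝ := fun p => (N p)⁻¹ • v p with hudef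
  have hu_abs : ∀ p j, |u p j| ≤ 1 := by
    intro p j
    have : |u p j| = |v p j| / N p := by
      simp [hudef, abs_mul, abs_inv, abs_of_pos (hNpos p), div_eq_inv_mul]
    rw [this, div_le_one (hNpos p)]
    exact abs_le_l2 (v p) j
  have hu_mem : ∀ p, u p ∈ Metric.closedBall (0 : {j // j ∈ S₁} → ℝ) 1 := by
    intro p
    rw [Metric.mem_closedBall, dist_pi_le_iff zero_le_one]
    intro j
    rw [Real.dist_eq, Pi.zero_apply, sub_zero]
    exact hu_abs p j
  obtain ⟨η, -, φ, hφmono, hφtend⟩ :=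
    tendsto_subseq_of_bounded Metric.isBounded_closedBall hu_mem
  have hl2u : ∀ p, l2 (u p) = 1 := by
    intro p
    rw [hudef]
    simp only [l2_smul', abs_inv, abs_of_pos (hNpos p)]
    exact inv_mul_cancel₀ (ne_of_gt (hNpos p))
  have hl2η : l2 η = 1 := by
    have h1 : Filter.Tendsto (fun p => l2 (u (φ p))) Filter.atTop (nhds (l2 η)) :=
      (continuous_l2.tendsto η).comp hφtend
    have h2 : Filter.Tendsto (fun p => l2 (u (φ p))) Filter.atTop (nhds 1) := by
      simp only [hl2u]; exact tendsto_const_nhds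
    exact tendsto_nhds_unique h1 h2
  have hηne : η ≠ 0 := by
    intro h
    rw [h] at hl2η
    simp [l2] at hl2η
  -- expressing colSub mulVec
  have hmvA : ∀ p (r : Fin m),
      (colSub A S₁).mulVec (u p) r = (N p)⁻¹ * ∑ j ∈ S₁, A r j * x (p + P) j := by
    intro p r
    simp only [colSub, Matrix.mulVec, dotProduct, Matrix.submatrix_apply, id_eq,
      hudef, Pi.smul_apply, smul_eq_mul, hvdef]
    rw [Finset.mul_sum, ← Finset.sum_coe_sort S₁ (fun j => (N p)⁻¹ * (A r j * x (p + P) j))]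
    exact Finset.sum_congr rfl (fun j _ => by ring)
  have hmvB : ∀ p (i : Fin l),
      (colSub B S₁).mulVec (u p) i = (N p)⁻¹ * ∑ j ∈ S₁, B i j * x (p + P) j := by
    intro p i
    simp only [colSub, Matrix.mulVec, dotProduct, Matrix.submatrix_apply, id_eq,
      hudef, Pi.smul_apply, smul_eq_mul, hvdef]
    rw [Finset.mul_sum, ← Finset.sum_coe_sort S₁ (fun j => (N p)⁻¹ * (B i j * x (p + P) j))]
    exact Finset.sum_congr rfl (fun j _ => by ring)
  -- limits of mulVec along the subsequence
  have hlimA : ∀ r : Fin m, Filter.Tendsto (fun p => (colSub A S₁).mulVec (u (φ p)) r)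
      Filter.atTop (nhds ((colSub A S₁).mulVec η r)) := by
    intro r
    have hc : Continuous fun w : {j // j ∈ S₁} → ℝ => (colSub A S₁).mulVec w r := by
      simp only [Matrix.mulVec, dotProduct]
      exact continuous_finset_sum _ fun j _ => (continuous_const.mul (continuous_apply j))
    exact (hc.tendsto η).comp hφtend
  have hlimB : ∀ i : Fin l, Filter.Tendsto (fun p => (colSub B S₁).mulVec (u (φ p)) i)
      Filter.atTop (nhds ((colSub B S₁).mulVec η i)) := by
    intro i
    have hc : Continuous fun w : {j // j ∈ S₁} → ℝ => (colSub B S₁).mulVec w i := by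
      simp only [Matrix.mulVec, dotProduct]
      exact continuous_finset_sum _ fun j _ => (continuous_const.mul (continuous_apply j))
    exact (hc.tendsto η).comp hφtend
  have hNφ : Filter.Tendsto (fun p => N (φ p)) Filter.atTop Filter.atTop :=
    hNtop.comp hφmono.tendsto_atTop
  refine ⟨η, hηne, hl2η, ?_, ?_⟩
  · -- A_{S₁} η = 0
    funext r
    have hbound : ∀ q, |∑ j ∈ S₁, A r j * x q j| ≤
        |y r| + ε + ∑ j ∈ S₂, |A r j| * C := by
      intro q
      have hres : |y r - A.mulVec (x q) r| ≤ ε := by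
        have := abs_le_l2 (y - A.mulVec (x q)) r
        simp only [Pi.sub_apply] at this
        exact this.trans (hfeas q).1
      have hAx : |A.mulVec (x q) r| ≤ |y r| + ε := by
        have : A.mulVec (x q) r = y r - (y r - A.mulVec (x q) r) := by ring
        rw [this]
        exact (abs_sub _ _).trans (add_le_add (le_refl _) hres)
      have heq : ∑ j ∈ S₁, A r j * x q j
          = A.mulVec (x q) r - ∑ j ∈ S₂, A r j * x q j := by
        have := hsum q (A r)
        simp only [Matrix.mulVec, dotProduct]
        linarith [this]
      rw [heq]
      have h2 : |∑ j ∈ S₂, A r j * x q j| ≤ ∑ j ∈ S₂, |A r j| * C := by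
        refine (Finset.abs_sum_le_sum_abs _ _).trans (Finset.sum_le_sum ?_)
        intro j hj
        rw [abs_mul]
        exact mul_le_mul_of_nonneg_left (hCle q j hj) (abs_nonneg _)
      calc |A.mulVec (x q) r - ∑ j ∈ S₂, A r j * x q j|
          ≤ |A.mulVec (x q) r| + |∑ j ∈ S₂, A r j * x q j| := abs_sub _ _
        _ ≤ |y r| + ε + ∑ j ∈ S₂, |A r j| * C := add_le_add hAx h2
    set K : ℝ := |y r| + ε + ∑ j ∈ S₂, |A r j| * C with hKdef
    have hzero : Filter.Tendsto (fun p => (colSub A S₁).mulVec (u (φ p)) r)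
        Filter.atTop (nhds 0) := by
      refine squeeze_zero_norm (a := fun p => K / N (φ p)) ?_
        (Filter.Tendsto.div_atTop tendsto_const_nhds hNφ)
      intro p
      show ‖(colSub A S₁).mulVec (u (φ p)) r‖ ≤ K / N (φ p)
      rw [Real.norm_eq_abs, hmvA (φ p) r, abs_mul, abs_inv,
        abs_of_pos (hNpos (φ p)), div_eq_inv_mul]
      exact mul_le_mul_of_nonneg_left (hbound (φ p + P)) (inv_nonneg.mpr (hNpos (φ p)).le)
    rw [Pi.zero_apply]
    exact tendsto_nhds_unique (hlimA r) hzero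
  · -- B_{S₁} η ≤ 0
    intro i
    have hbound : ∀ q, ∑ j ∈ S₁, B i j * x q j ≤ b i + ∑ j ∈ S₂, |B i j| * C := by
      intro q
      have hBx : B.mulVec (x q) i ≤ b i := (hfeas q).2 i
      have heq : ∑ j ∈ S₁, B i j * x q j
          = B.mulVec (x q) i - ∑ j ∈ S₂, B i j * x q j := by
        have := hsum q (B i)
        simp only [Matrix.mulVec, dotProduct]
        linarith [this]
      rw [heq]
      have h2 : -(∑ j ∈ S₂, B i j * x q j) ≤ ∑ j ∈ S₂, |B i j| * C := by
        refine (neg_le_abs _).trans ?_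
        refine (Finset.abs_sum_le_sum_abs _ _).trans (Finset.sum_le_sum ?_)
        intro j hj
        rw [abs_mul]
        exact mul_le_mul_of_nonneg_left (hCle q j hj) (abs_nonneg _)
      linarith
    set K : ℝ := b i + ∑ j ∈ S₂, |B i j| * C with hKdef
    have hzeroK : Filter.Tendsto (fun p => K / N (φ p)) Filter.atTop (nhds 0) :=
      Filter.Tendsto.div_atTop tendsto_const_nhds hNφ
    refine le_of_tendsto_of_tendsto' (hlimB i) hzeroK ?_
    intro p
    rw [hmvB (φ p) i, div_eq_inv_mul]
    exact mul_le_mul_of_nonneg_left (hbound (φ p + P)) (inv_nonneg.mpr (hNpos (φ p)).le)
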